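/- For every commutative ring A, every family of weights R : ℤ → A, every integer n and every natural number j ≥ 1, the following inversion identity holds: −∏_{ℓ=1}^{j} R_{n−ℓ} = Σ_{i=0}^{j} (−1)^{i−1} · Π_{n−j,n+j−1}(i) · Z_{n−1,n−1}(2j−2i). -/

import Mathlib

open Finset

variable {A : Type*} [CommRing A]

/-- End height of a walk starting at a given height, with steps given by a list of
Booleans (`true` = ascending step `+1`, `false` = descending step `-1`). -/
def walkEnd : ℤ → List Bool → ℤ
  | a, [] => a
  | a, true :: s => walkEnd (a + 1) s
  | a, false :: s => walkEnd (a - 1) s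

/-- Weight of a walk: the product of `R h` over all descending steps `h → h - 1`. -/
def walkWeight (R : ℤ → A) : ℤ → List Bool → A
  | _, [] => 1
  | a, true :: s => walkWeight R (a + 1) s
  | a, false :: s => R a * walkWeight R (a - 1) s

/-- Whether every height visited by the walk (including the first and last) is `≥ c`. -/
def walkAbove (c : ℤ) : ℤ → List Bool → Bool
  | a, [] => decide (c ≤ a)
  | a, true :: s => decide (c ≤ a) && walkAbove c (a + 1) s
  | a, false :: s => decide (c ≤ a) && walkAbove c (a - 1) s

/-- `Zw R a b k`: the generating function of walks of length `k` from height `a` to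
height `b`, each walk weighted by `R h` per descending step from height `h`. -/
def Zw (R : ℤ → A) (a b : ℤ) (k : ℕ) : A :=
  ∑ s : Fin k → Bool,
    if walkEnd a (List.ofFn s) = b then walkWeight R a (List.ofFn s) else 0

/-- `Zwp R a b k`: the same generating function, restricted to walks staying at
heights `≥ a` ("positive walks"). -/
def Zwp (R : ℤ → A) (a b : ℤ) (k : ℕ) : A :=
  ∑ s : Fin k → Bool,
    if walkEnd a (List.ofFn s) = b ∧ walkAbove a a (List.ofFn s) = true then
      walkWeight R a (List.ofFn s)
    else 0

/-- `Pdim R a b k`: hard-dimer partition function on the segment `[a,b]`: the sum over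
`k`-element subsets `S` of `{a+1, …, b}` with no two consecutive elements of
`∏ i in S, R i` (a dimer on `[i-1,i]` carries weight `R i`). -/
noncomputable def Pdim (R : ℤ → A) (a b : ℤ) (k : ℕ) : A :=
  ∑ S ∈ Finset.powersetCard k (Finset.Icc (a + 1) b),
    if ∀ i ∈ S, i + 1 ∉ S then ∏ i ∈ S, R i else 0

/-- `Vp R g m a b = Σ_{k=1}^{m} g_k • Zw R a b (2k-1)`: grand-canonical generating
function for walks of odd length from `a` to `b`. -/
def Vp (R : ℤ → A) (g : ℕ → A) (m : ℕ) (a b : ℤ) : A :=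
  ∑ k ∈ Finset.Icc 1 m, g k * Zw R a b (2 * k - 1)

/-- The conserved quantities `Γ_{2i}(n)`; `Gam R g m i n` stands for `Γ_{2i}(n)`. -/
def Gam (R : ℤ → A) (g : ℕ → A) (m : ℕ) (i : ℕ) (n : ℤ) : A :=
  if i = 0 then R (n - 1) - Vp R g m (n - 1) (n - 2) + (if n = 0 then 1 else 0)
  else
    Zwp R (n - 1) (n - 1) (2 * i) *
        (R (n - 1) - Vp R g m (n - 1) (n - 2) + (if n = 0 then 1 else 0)) -
      ∑ j ∈ Finset.Icc 1 i,
        Zwp R (n - 1) (n - 1 + 2 * (j : ℤ)) (2 * i) * Vp R g m (n + 2 * (j : ℤ) - 1) (n - 2)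

/-- The symmetric conserved quantities `Γ̃_{2i}(n)`; `Gamt R g m i n` stands
for `Γ̃_{2i}(n)`. -/
def Gamt (R : ℤ → A) (g : ℕ → A) (m : ℕ) (i : ℕ) (n : ℤ) : A :=
  if i = 0 then R n - Vp R g m n (n - 1)
  else
    (Zw R n (n - 1) (2 * i - 1) - R (n - 1) * R (n + 1) * Zw R (n - 2) (n + 1) (2 * i - 1)) *
        (R n - Vp R g m n (n - 1)) -
      ∑ j ∈ Finset.Icc 1 i,
        (Zw R (n - (j : ℤ)) (n + (j : ℤ) - 1) (2 * i - 1) -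
            R (n - (j : ℤ) - 1) * R (n + (j : ℤ) + 1) *
              Zw R (n - (j : ℤ) - 2) (n + (j : ℤ) + 1) (2 * i - 1)) *
          Vp R g m (n + (j : ℤ)) (n - (j : ℤ) - 1)

/-- The master equation: `R i = 0` for `i < 0` and `R n = 1 + V'_{n,n-1}` for `n ≥ 0`. -/
def MasterEq (R : ℤ → A) (g : ℕ → A) (m : ℕ) : Prop :=
  (∀ i : ℤ, i < 0 → R i = 0) ∧ ∀ n : ℤ, 0 ≤ n → R n = 1 + Vp R g m n (n - 1)

/-- `Zodd R a b i = Zw R a b (2i-1)`, with the convention that for `i = 0`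
(walks of length `-1`) it equals `1` if `b = a - 1` and `0` otherwise. -/
def Zodd (R : ℤ → A) (a b : ℤ) (i : ℕ) : A :=
  if i = 0 then (if b = a - 1 then 1 else 0) else Zw R a b (2 * i - 1)

/-- Binomial coefficient with an integer lower index, with the convention that it
vanishes for negative lower index. -/
def Cz (n : ℕ) (p : ℤ) : ℤ := if 0 ≤ p then n.choose p.toNat else 0


section StmtAux

theorem Zw_zero (R : ℤ → A) (x y : ℤ) : Zw R x y 0 = if x = y then 1 else 0 := by
  simp [Zw, walkEnd, walkWeight, List.ofFn_zero]

theorem Zw_succ (R : ℤ → A) (x y : ℤ) (k : ℕ) :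
    Zw R x y (k+1) = Zw R (x+1) y k + R x * Zw R (x-1) y k := by
  rw [Zw]
  rw [← Equiv.sum_comp (Fin.consEquiv (fun _ : Fin (k+1) => Bool))
    (fun s => if walkEnd x (List.ofFn s) = y then walkWeight R x (List.ofFn s) else 0)]
  rw [Fintype.sum_prod_type, Fintype.sum_bool]
  simp only [Fin.consEquiv_apply, List.ofFn_succ, Fin.cons_zero, Fin.cons_succ,
    walkEnd, walkWeight]
  rw [Zw, Zw, Finset.mul_sum]
  congr 1
  exact Finset.sum_congr rfl (by intro s _; rw [mul_ite, mul_zero])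

theorem Zw_far (R : ℤ → A) (k : ℕ) : ∀ x y : ℤ, (x + k < y ∨ y + k < x) → Zw R x y k = 0 := by
  induction k with
  | zero =>
    intro x y h
    rw [Zw_zero, if_neg]
    intro e; subst e; push_cast at h; omega
  | succ k ih =>
    intro x y h
    push_cast at h
    rw [Zw_succ, ih _ _ (by omega), ih _ _ (by omega), mul_zero, add_zero]

theorem Zw_top (R : ℤ → A) (k : ℕ) : ∀ x : ℤ, Zw R x (x + k) k = 1 := by
  induction k with
  | zero => intro x; rw [Zw_zero, if_pos (by omega)]
  | succ k ih =>
    intro x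
    have h1 : x + ((k:ℕ)+1 : ℕ) = (x+1) + (k:ℕ) := by push_cast; ring
    rw [Zw_succ, h1, ih, Zw_far R k (x-1) (x+1+k) (by omega), mul_zero, add_zero]

def Zc (R : ℤ → A) (lo hi : ℤ) : ℕ → ℤ → ℤ → A
  | 0, x, y => if x = y then 1 else 0
  | (k+1), x, y => (if x + 1 ≤ hi then Zc R lo hi k (x+1) y else 0)
      + (if lo ≤ x - 1 then R x * Zc R lo hi k (x-1) y else 0)

theorem Zc_eq_Zw (R : ℤ → A) (lo hi : ℤ) (k : ℕ) : ∀ x y : ℤ,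
    2*lo - 1 ≤ x + y - k → x + y + k ≤ 2*hi + 1 → Zc R lo hi k x y = Zw R x y k := by
  induction k with
  | zero => intro x y _ _; rw [Zw_zero, Zc]
  | succ k ih =>
    intro x y h1 h2
    push_cast at h1 h2
    rw [Zc, Zw_succ]
    congr 1
    · split_ifs with h
      · exact ih _ _ (by omega) (by omega)
      · rw [Zw_far R k (x+1) y (by omega)]
    · split_ifs with h
      · rw [ih _ _ (by omega) (by omega)]
      · rw [Zw_far R k (x-1) y (by omega), mul_zero]

theorem Zw_sub_Zc (R : ℤ → A) (lo hi : ℤ) (k : ℕ) : ∀ x y : ℤ,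
    lo ≤ x → lo ≤ y → x + y - k = 2*lo - 2 → x + y + k ≤ 2*hi + 1 →
    Zw R x y k = Zc R lo hi k x y + ∏ h ∈ Finset.Icc lo x, R h := by
  induction k with
  | zero => intro x y hx hy h1 h2; omega
  | succ k ih =>
    intro x y hx hy h1 h2
    push_cast at h1 h2
    rw [Zc, Zw_succ]
    have hup : Zw R (x+1) y k = (if x + 1 ≤ hi then Zc R lo hi k (x+1) y else 0) := by
      split_ifs with h
      · exact (Zc_eq_Zw R lo hi k _ _ (by omega) (by omega)).symm
      · exact Zw_far R k (x+1) y (by omega)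
    rcases eq_or_lt_of_le hx with he | hlt
    · -- x = lo
      subst he
      rw [if_neg (show ¬ lo ≤ lo - 1 by omega), hup]
      have h3 : Zw R (lo-1) y k = 1 := by
        have hy' : y = (lo - 1) + (k:ℕ) := by push_cast; omega
        rw [hy']; exact Zw_top R k (lo-1)
      rw [h3, mul_one]
      have h4 : Finset.Icc lo lo = {lo} := by simp
      rw [h4, Finset.prod_singleton]
      ring
    · -- lo < x
      rw [if_pos (show lo ≤ x - 1 by omega), hup]
      rw [ih (x-1) y (by omega) hy (by omega) (by omega)]
      have h5 : Finset.Icc lo x = insert x (Finset.Icc lo (x-1)) := by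
        ext a; simp; omega
      rw [h5, Finset.prod_insert (by simp)]
      ring

theorem Pdim_zero (R : ℤ → A) (a b : ℤ) : Pdim R a b 0 = 1 := by
  simp [Pdim]

theorem Pdim_vanish (R : ℤ → A) (a b : ℤ) (i : ℕ) (hi : 1 ≤ i) (h : b + 1 < a + 2*i) :
    Pdim R a b i = 0 := by
  rw [Pdim]
  apply Finset.sum_eq_zero
  intro S hS
  rw [Finset.mem_powersetCard] at hS
  rw [if_neg]
  intro hP
  have hdisj : Disjoint S (S.image (· + 1)) := by
    rw [Finset.disjoint_left]
    intro x hx1 hx2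
    rw [Finset.mem_image] at hx2
    obtain ⟨y, hy, rfl⟩ := hx2
    exact hP y hy hx1
  have hsub : S ∪ S.image (· + 1) ⊆ Finset.Icc (a+1) (b+1) := by
    intro x hx
    rcases Finset.mem_union.1 hx with hx | hx
    · have := hS.1 hx; rw [Finset.mem_Icc] at this ⊢; omega
    · rw [Finset.mem_image] at hx
      obtain ⟨y, hy, rfl⟩ := hx
      have := hS.1 hy; rw [Finset.mem_Icc] at this ⊢; omega
  have hcard := Finset.card_le_card hsub
  rw [Finset.card_union_of_disjoint hdisj,
    Finset.card_image_of_injective _ (add_left_injective 1), Int.card_Icc] at hcard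
  have h2 := hS.2
  omega

theorem Pdim_filter (R : ℤ → A) (a b : ℤ) (k : ℕ) :
    Pdim R a b k = ∑ S ∈ (Finset.powersetCard k (Finset.Icc (a + 1) b)).filter
      (fun S => ∀ i ∈ S, i + 1 ∉ S), ∏ i ∈ S, R i :=
  (Finset.sum_filter _ _).symm

theorem Pdim_rec (R : ℤ → A) (a b : ℤ) (i : ℕ) (hab : a < b) :
    Pdim R a b (i+1) = Pdim R (a+1) b (i+1) + R (a+1) * Pdim R (a+2) b i := by
  rw [Pdim_filter, Pdim_filter, Pdim_filter]
  set cond : Finset ℤ → Prop := fun S => ∀ i ∈ S, i + 1 ∉ S with hcond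
  rw [← Finset.sum_filter_add_sum_filter_not
    ((Finset.powersetCard (i+1) (Finset.Icc (a + 1) b)).filter cond) (fun S => a+1 ∈ S)]
  rw [add_comm]
  congr 1
  · -- subsets not containing a+1
    apply Finset.sum_congr _ (fun _ _ => rfl)
    ext S
    simp only [Finset.mem_filter, Finset.mem_powersetCard]
    constructor
    · rintro ⟨⟨⟨h1, h2⟩, h3⟩, h4⟩
      refine ⟨⟨fun x hx => ?_, h2⟩, h3⟩
      have := h1 hx
      rw [Finset.mem_Icc] at this ⊢
      have : x ≠ a + 1 := fun e => h4 (e ▸ hx)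
      omega
    · rintro ⟨⟨h1, h2⟩, h3⟩
      refine ⟨⟨⟨fun x hx => ?_, h2⟩, h3⟩, fun hmem => ?_⟩
      · have := h1 hx; rw [Finset.mem_Icc] at this ⊢; omega
      · have := h1 hmem; rw [Finset.mem_Icc] at this; omega
  · -- subsets containing a+1
    rw [Finset.mul_sum]
    apply Finset.sum_nbij' (fun S => S.erase (a+1)) (fun S => insert (a+1) S)
    · -- maps into
      intro S hS
      simp only [Finset.mem_filter, Finset.mem_powersetCard] at hS ⊢
      obtain ⟨⟨⟨h1, h2⟩, h3⟩, h4⟩ := hS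
      refine ⟨⟨fun x hx => ?_, ?_⟩, fun x hx => ?_⟩
      · rw [Finset.mem_erase] at hx
        have hxI := h1 hx.2
        rw [Finset.mem_Icc] at hxI ⊢
        have hne2 : x ≠ a + 2 := by
          intro e
          apply h3 (a+1) h4
          have e2 : a + 1 + 1 = x := by omega
          rw [e2]; exact hx.2
        have := hx.1
        omega
      · rw [Finset.card_erase_of_mem h4, h2]; omega
      · rw [Finset.mem_erase] at hx
        intro hmem
        rw [Finset.mem_erase] at hmem
        exact h3 x hx.2 hmem.2
    · -- inverse maps into
      intro S hS
      simp only [Finset.mem_filter, Finset.mem_powersetCard] at hS ⊢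
      obtain ⟨⟨h1, h2⟩, h3⟩ := hS
      have hnotmem : a + 1 ∉ S := by
        intro hmem; have := h1 hmem; rw [Finset.mem_Icc] at this; omega
      refine ⟨⟨⟨fun x hx => ?_, ?_⟩, fun x hx => ?_⟩, Finset.mem_insert_self _ _⟩
      · rw [Finset.mem_insert] at hx
        rcases hx with rfl | hx
        · rw [Finset.mem_Icc]; omega
        · have := h1 hx; rw [Finset.mem_Icc] at this ⊢; omega
      · rw [Finset.card_insert_of_notMem hnotmem, h2]
      · rw [Finset.mem_insert] at hx
        intro hmem
        rw [Finset.mem_insert] at hmem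
        rcases hx with rfl | hx
        · rcases hmem with h | h
          · omega
          · have := h1 h; rw [Finset.mem_Icc] at this; omega
        · rcases hmem with h | h
          · have := h1 hx; rw [Finset.mem_Icc] at this; omega
          · exact h3 x hx h
    · -- left inverse
      intro S hS
      simp only [Finset.mem_filter] at hS
      exact Finset.insert_erase hS.2
    · -- right inverse
      intro S hS
      simp only [Finset.mem_filter, Finset.mem_powersetCard] at hS
      apply Finset.erase_insert
      intro hmem; have := hS.1.1 hmem; rw [Finset.mem_Icc] at this; omega
    · -- values
      intro S hS
      simp only [Finset.mem_filter] at hS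
      exact (Finset.mul_prod_erase _ _ hS.2).symm

noncomputable def cf (R : ℤ → A) (hi : ℤ) (m i : ℕ) : A :=
  (-1:A)^i * Pdim R (hi - m + 1) hi i

theorem cf_zero (R : ℤ → A) (hi : ℤ) (m : ℕ) : cf R hi m 0 = 1 := by
  rw [cf, Pdim_zero, pow_zero, one_mul]

theorem cf_vanish (R : ℤ → A) (hi : ℤ) (m i : ℕ) (h1 : 1 ≤ i) (h2 : m < 2*i) :
    cf R hi m i = 0 := by
  rw [cf, Pdim_vanish R _ _ i h1 (by push_cast; omega), mul_zero]

theorem cf_rec (R : ℤ → A) (hi : ℤ) (m i : ℕ) :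
    cf R hi (m+2) (i+1) = cf R hi (m+1) (i+1) - R (hi - m) * cf R hi m i := by
  have h := Pdim_rec R (hi - (m:ℤ) - 1) hi i (by omega)
  have e2 : hi - ((m+2:ℕ):ℤ) + 1 = hi - (m:ℤ) - 1 := by push_cast; ring
  have e1 : hi - ((m+1:ℕ):ℤ) + 1 = hi - (m:ℤ) := by push_cast; ring
  have e0 : hi - (m:ℤ) - 1 + 1 = hi - (m:ℤ) := by ring
  have e0' : hi - (m:ℤ) - 1 + 2 = hi - (m:ℤ) + 1 := by ring
  rw [cf, cf, cf, e2, e1, h, e0, e0', pow_succ]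
  ring

noncomputable def Vv (R : ℤ → A) (lo hi : ℤ) (m : ℕ) (x : ℤ) : A :=
  ∑ i ∈ Finset.range (m+1), cf R hi m i * Zc R lo hi (m - 2*i) x hi

theorem sum_pull {γ : Type*} (s : Finset γ) (c : Prop) [Decidable c] (f : γ → A) :
    (∑ y ∈ s, if c then f y else 0) = if c then ∑ y ∈ s, f y else 0 := by
  split_ifs <;> simp

/-- Chapman–Kolmogorov. -/
theorem Zc_CK (R : ℤ → A) (lo hi : ℤ) (a : ℕ) : ∀ (b : ℕ) (x z : ℤ), lo ≤ x → x ≤ hi →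
    Zc R lo hi (a+b) x z = ∑ y ∈ Finset.Icc lo hi, Zc R lo hi a x y * Zc R lo hi b y z := by
  induction a with
  | zero =>
    intro b x z hx1 hx2
    have h : ∀ y ∈ Finset.Icc lo hi, Zc R lo hi 0 x y * Zc R lo hi b y z
        = if x = y then Zc R lo hi b y z else 0 := by
      intro y _; rw [Zc]; split_ifs <;> simp
    rw [Finset.sum_congr rfl h, Finset.sum_ite_eq, if_pos (Finset.mem_Icc.2 ⟨hx1, hx2⟩),
      Nat.zero_add]
  | succ a ih =>
    intro b x z hx1 hx2
    have hR : ∀ y ∈ Finset.Icc lo hi, Zc R lo hi (a+1) x y * Zc R lo hi b y z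
        = (if x + 1 ≤ hi then Zc R lo hi a (x+1) y * Zc R lo hi b y z else 0)
        + (if lo ≤ x - 1 then R x * (Zc R lo hi a (x-1) y * Zc R lo hi b y z) else 0) := by
      intro y _; rw [Zc]; split_ifs <;> ring
    rw [Finset.sum_congr rfl hR, Finset.sum_add_distrib, sum_pull, sum_pull, Nat.succ_add, Zc]
    congr 1
    · split_ifs with h
      · exact ih b (x+1) z (by omega) h
      · rfl
    · split_ifs with h
      · rw [← Finset.mul_sum, ih b (x-1) z h (by omega)]
      · rfl

theorem Vv_eq (R : ℤ → A) (lo hi : ℤ) (N : ℕ) (hiN : hi = lo + N - 1) :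
    ∀ m, m ≤ N → ∀ x, lo ≤ x → x ≤ hi →
      Vv R lo hi m x = if x = hi - m then 1 else 0 := by
  intro m
  induction m using Nat.strong_induction_on with
  | _ m IH =>
    match m with
    | 0 =>
      intro _ x hx1 hx2
      rw [Vv, Finset.sum_range_one, cf_zero, one_mul]
      have e : (0:ℕ) - 2*0 = 0 := rfl
      rw [e, Zc]
      norm_num
    | 1 =>
      intro _ x hx1 hx2
      rw [Vv, Finset.sum_range_succ, Finset.sum_range_one, cf_zero, one_mul,
        cf_vanish R hi 1 1 le_rfl (by omega)]
      have e : (1:ℕ) - 2*0 = 1 := rfl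
      rw [e, Zc]
      simp only [Zc, zero_mul, add_zero]
      push_cast
      split_ifs <;> first | ring1 | (exfalso; omega)
    | (m+2) =>
      intro hmN x hx1 hx2
      have hterm : ∀ i ∈ Finset.range (m+3),
          cf R hi (m+2) i * Zc R lo hi ((m+2) - 2*i) x hi
          = ((if x + 1 ≤ hi then cf R hi (m+1) i * Zc R lo hi ((m+1) - 2*i) (x+1) hi else 0)
            + (if lo ≤ x - 1 then
                R x * (cf R hi (m+1) i * Zc R lo hi ((m+1) - 2*i) (x-1) hi) else 0))
            - R (hi - m) * (if 1 ≤ i then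
                cf R hi m (i-1) * Zc R lo hi (m - 2*(i-1)) x hi else 0) := by
        intro i _
        match i with
        | 0 =>
          rw [cf_zero, cf_zero, if_neg (show ¬ (1:ℕ) ≤ 0 by omega)]
          rw [show m + 2 - 2*0 = (m + 1 - 2*0) + 1 from by omega, Zc]
          split_ifs <;> ring1
        | (i'+1) =>
          rw [if_pos (show (1:ℕ) ≤ i'+1 by omega), Nat.add_sub_cancel, cf_rec]
          by_cases h2 : 2*(i'+1) ≤ m+1
          · have eR : m - 2*i' = ((m+1) - 2*(i'+1)) + 1 := by omega
            have eL : (m+2) - 2*(i'+1) = ((m+1) - 2*(i'+1)) + 1 := by omega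
            rw [eR, eL]
            simp only [Zc]
            split_ifs <;> ring1
          · rw [cf_vanish R hi (m+1) (i'+1) (by omega) (by omega),
              show (m+2) - 2*(i'+1) = m - 2*i' from by omega]
            split_ifs <;> ring1
      rw [Vv, Finset.sum_congr rfl hterm, Finset.sum_sub_distrib, Finset.sum_add_distrib,
        sum_pull, sum_pull]
      have hS1 : ∑ i ∈ Finset.range (m+3), cf R hi (m+1) i * Zc R lo hi ((m+1) - 2*i) (x+1) hi
          = Vv R lo hi (m+1) (x+1) := by
        rw [Finset.sum_range_succ, cf_vanish R hi (m+1) (m+2) (by omega) (by omega),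
          zero_mul, add_zero, Vv]
      have hS2 : ∑ i ∈ Finset.range (m+3), cf R hi (m+1) i * Zc R lo hi ((m+1) - 2*i) (x-1) hi
          = Vv R lo hi (m+1) (x-1) := by
        rw [Finset.sum_range_succ, cf_vanish R hi (m+1) (m+2) (by omega) (by omega),
          zero_mul, add_zero, Vv]
      have hS3 : ∑ i ∈ Finset.range (m+3),
          (if 1 ≤ i then cf R hi m (i-1) * Zc R lo hi (m - 2*(i-1)) x hi else 0)
          = Vv R lo hi m x := by
        rw [Finset.sum_range_succ']
        rw [if_neg (show ¬ (1:ℕ) ≤ 0 by omega), add_zero]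
        have hc : ∀ i ∈ Finset.range (m+2),
            (if 1 ≤ i+1 then cf R hi m (i+1-1) * Zc R lo hi (m - 2*(i+1-1)) x hi else 0)
            = cf R hi m i * Zc R lo hi (m - 2*i) x hi := by
          intro i _
          rw [if_pos (show (1:ℕ) ≤ i+1 by omega), Nat.add_sub_cancel]
        rw [Finset.sum_congr rfl hc, Finset.sum_range_succ,
          cf_vanish R hi m (m+1) (by omega) (by omega), zero_mul, add_zero, Vv]
      have hS2' : ∑ i ∈ Finset.range (m+3),
          R x * (cf R hi (m+1) i * Zc R lo hi ((m+1) - 2*i) (x-1) hi)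
          = R x * Vv R lo hi (m+1) (x-1) := by
        rw [← Finset.mul_sum, hS2]
      have hS3' : ∑ i ∈ Finset.range (m+3),
          R (hi - (m:ℤ)) * (if 1 ≤ i then cf R hi m (i-1) * Zc R lo hi (m - 2*(i-1)) x hi else 0)
          = R (hi - (m:ℤ)) * Vv R lo hi m x := by
        rw [← Finset.mul_sum, hS3]
      rw [hS1, hS2', hS3']
      have hVm : Vv R lo hi m x = if x = hi - m then 1 else 0 :=
        IH m (by omega) (by omega) x hx1 hx2
      rw [hVm]
      clear hterm hS1 hS2 hS2' hS3 hS3'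
      have hV1 : x + 1 ≤ hi → Vv R lo hi (m+1) (x+1) = if x + 1 = hi - (m+1:ℕ) then 1 else 0 :=
        fun h => IH (m+1) (by omega) (by omega) (x+1) (by omega) h
      have hV2 : lo ≤ x - 1 → Vv R lo hi (m+1) (x-1) = if x - 1 = hi - (m+1:ℕ) then 1 else 0 :=
        fun h => IH (m+1) (by omega) (by omega) (x-1) h (by omega)
      push_cast at hV1 hV2 ⊢
      have e1 : (if x + 1 ≤ hi then Vv R lo hi (m+1) (x+1) else 0)
          = if x = hi - ((m:ℤ) + 2) then 1 else 0 := by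
        by_cases h1 : x + 1 ≤ hi
        · rw [if_pos h1, hV1 h1]
          split_ifs <;> first | rfl | (exfalso; omega)
        · rw [if_neg h1, if_neg (by omega)]
      have e2 : (if lo ≤ x - 1 then R x * Vv R lo hi (m+1) (x-1) else 0)
          = R (hi - (m:ℤ)) * (if x = hi - (m:ℤ) then 1 else 0) := by
        by_cases h1 : lo ≤ x - 1
        · rw [if_pos h1, hV2 h1]
          by_cases h2 : x = hi - (m:ℤ)
          · rw [if_pos h2, if_pos (by omega), h2]
          · rw [if_neg h2, if_neg (by omega), mul_zero, mul_zero]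
        · rw [if_neg h1, if_neg (by omega), mul_zero]
      rw [e1, e2]
      ring1

theorem VN_zero (R : ℤ → A) (lo hi : ℤ) (N : ℕ) (hiN : hi = lo + N - 1) :
    ∀ (d : ℕ) (x : ℤ), lo ≤ x → x ≤ hi →
      ∑ i ∈ Finset.range (N+1), cf R hi N i * Zc R lo hi ((N - 2*i) + d) x hi = 0 := by
  intro d
  induction d with
  | zero =>
    intro x hx1 hx2
    have h : Vv R lo hi N x = 0 := by
      rw [Vv_eq R lo hi N hiN N le_rfl x hx1 hx2, if_neg (by omega)]
    simp only [Nat.add_zero]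
    rw [← Vv]
    exact h
  | succ d ih =>
    intro x hx1 hx2
    have hterm : ∀ i ∈ Finset.range (N+1), cf R hi N i * Zc R lo hi ((N - 2*i) + (d+1)) x hi
        = (if x+1 ≤ hi then cf R hi N i * Zc R lo hi ((N - 2*i)+d) (x+1) hi else 0)
          + (if lo ≤ x-1 then R x * (cf R hi N i * Zc R lo hi ((N - 2*i)+d) (x-1) hi) else 0) := by
      intro i _
      rw [show (N - 2*i) + (d+1) = ((N - 2*i)+d)+1 from rfl, Zc]
      split_ifs <;> ring1
    rw [Finset.sum_congr rfl hterm, Finset.sum_add_distrib, sum_pull, sum_pull]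
    have hA : (if x+1 ≤ hi then
        (∑ i ∈ Finset.range (N+1), cf R hi N i * Zc R lo hi ((N - 2*i)+d) (x+1) hi) else 0)
        = 0 := by
      split_ifs with g
      · exact ih (x+1) (by omega) g
      · rfl
    have hB : (if lo ≤ x-1 then
        (∑ i ∈ Finset.range (N+1), R x * (cf R hi N i * Zc R lo hi ((N - 2*i)+d) (x-1) hi))
        else 0) = 0 := by
      split_ifs with g
      · rw [← Finset.mul_sum, ih (x-1) g (by omega), mul_zero]
      · rfl
    rw [hA, hB, add_zero]

theorem Zc_key (R : ℤ → A) (lo hi : ℤ) (N jj : ℕ) (hiN : hi = lo + N - 1) (hjj : jj ≤ N)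
    (hjj2 : lo ≤ hi - jj) (x : ℤ) (hx1 : lo ≤ x) (hx2 : x ≤ hi) :
    ∑ i ∈ Finset.range (N+1), cf R hi N i * Zc R lo hi (N - 2*i) x (hi - jj) = 0 := by
  have step1 : ∀ K : ℕ, Zc R lo hi K x (hi - (jj:ℤ))
      = ∑ i' ∈ Finset.range (jj+1), cf R hi jj i' * Zc R lo hi (K + (jj - 2*i')) x hi := by
    intro K
    have l1 : ∀ y ∈ Finset.Icc lo hi, Zc R lo hi K x y * (if y = hi - (jj:ℤ) then 1 else 0)
        = if y = hi - (jj:ℤ) then Zc R lo hi K x y else 0 := by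
      intro y _; split_ifs <;> ring1
    have l2 : ∀ y ∈ Finset.Icc lo hi, Zc R lo hi K x y * Vv R lo hi jj y
        = Zc R lo hi K x y * (if y = hi - (jj:ℤ) then 1 else 0) := by
      intro y hy
      rw [Finset.mem_Icc] at hy
      rw [Vv_eq R lo hi N hiN jj hjj y hy.1 hy.2]
    have l3 : ∀ y ∈ Finset.Icc lo hi, Zc R lo hi K x y * Vv R lo hi jj y
        = ∑ i' ∈ Finset.range (jj+1),
            cf R hi jj i' * (Zc R lo hi K x y * Zc R lo hi (jj - 2*i') y hi) := by
      intro y _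
      rw [Vv, Finset.mul_sum]
      exact Finset.sum_congr rfl (fun i _ => by ring)
    calc Zc R lo hi K x (hi - (jj:ℤ))
        = ∑ y ∈ Finset.Icc lo hi, (if y = hi - (jj:ℤ) then Zc R lo hi K x y else 0) := by
          rw [Finset.sum_ite_eq', if_pos (Finset.mem_Icc.2 ⟨hjj2, by omega⟩)]
      _ = ∑ y ∈ Finset.Icc lo hi, Zc R lo hi K x y * Vv R lo hi jj y := by
          exact (Finset.sum_congr rfl fun y hy => (l2 y hy).trans (l1 y hy)).symm
      _ = ∑ y ∈ Finset.Icc lo hi, ∑ i' ∈ Finset.range (jj+1),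
            cf R hi jj i' * (Zc R lo hi K x y * Zc R lo hi (jj - 2*i') y hi) :=
          Finset.sum_congr rfl l3
      _ = ∑ i' ∈ Finset.range (jj+1), ∑ y ∈ Finset.Icc lo hi,
            cf R hi jj i' * (Zc R lo hi K x y * Zc R lo hi (jj - 2*i') y hi) :=
          Finset.sum_comm
      _ = ∑ i' ∈ Finset.range (jj+1), cf R hi jj i' * Zc R lo hi (K + (jj - 2*i')) x hi := by
          apply Finset.sum_congr rfl
          intro i' _
          rw [← Finset.mul_sum, ← Zc_CK R lo hi K (jj - 2*i') x hi hx1 hx2]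
  have hmain : ∀ i ∈ Finset.range (N+1), cf R hi N i * Zc R lo hi (N - 2*i) x (hi - (jj:ℤ))
      = ∑ i' ∈ Finset.range (jj+1),
          cf R hi jj i' * (cf R hi N i * Zc R lo hi ((N - 2*i) + (jj - 2*i')) x hi) := by
    intro i _
    rw [step1 (N - 2*i), Finset.mul_sum]
    exact Finset.sum_congr rfl (fun i' _ => by ring)
  rw [Finset.sum_congr rfl hmain, Finset.sum_comm]
  apply Finset.sum_eq_zero
  intro i' _
  rw [← Finset.mul_sum, VN_zero R lo hi N hiN (jj - 2*i') x hx1 hx2, mul_zero]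

end StmtAux

/-- the inversion identity
`-∏_{ℓ=1}^{j} R_{n-ℓ} = Σ_{i=0}^{j} (-1)^{i-1} Π_{n-j,n+j-1}(i) Z_{n-1,n-1}(2j-2i)`. -/
theorem stmt_17 {A : Type*} [CommRing A] (R : ℤ → A) (n : ℤ) (j : ℕ) (hj : 1 ≤ j) :
    -∏ l ∈ Finset.Icc 1 j, R (n - (l : ℤ)) =
      ∑ i ∈ Finset.range (j + 1),
        (-1 : A) ^ (i + 1) * Pdim R (n - (j : ℤ)) (n + (j : ℤ) - 1) i *
          Zw R (n - 1) (n - 1) (2 * j - 2 * i) := by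
  have hneg : ∀ i ∈ Finset.range (j+1),
      (-1:A)^(i+1) * Pdim R (n - (j:ℤ)) (n + (j:ℤ) - 1) i * Zw R (n-1) (n-1) (2*j - 2*i)
      = -(((-1:A)^i * Pdim R (n - (j:ℤ)) (n + (j:ℤ) - 1) i)
          * Zw R (n-1) (n-1) (2*j - 2*i)) := by
    intro i _
    rw [pow_succ]
    ring
  rw [Finset.sum_congr rfl hneg, Finset.sum_neg_distrib, neg_inj]
  -- turn Zw into Zc plus the boundary correction
  have hzw : ∀ i ∈ Finset.range (j+1),
      ((-1:A)^i * Pdim R (n - (j:ℤ)) (n + (j:ℤ) - 1) i) * Zw R (n-1) (n-1) (2*j - 2*i)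
      = ((-1:A)^i * Pdim R (n - (j:ℤ)) (n + (j:ℤ) - 1) i)
          * Zc R (n - (j:ℤ)) (n + (j:ℤ) - 1) (2*j - 2*i) (n-1) (n-1)
        + (if i = 0 then ∏ h ∈ Finset.Icc (n - (j:ℤ)) (n-1), R h else 0) := by
    intro i _
    match i with
    | 0 =>
      rw [if_pos rfl, pow_zero, Pdim_zero, one_mul, one_mul, one_mul]
      exact Zw_sub_Zc R (n - (j:ℤ)) (n + (j:ℤ) - 1) (2*j - 2*0) (n-1) (n-1)
        (by omega) (by omega) (by omega) (by omega)
    | (i'+1) =>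
      rw [if_neg (Nat.succ_ne_zero i'), add_zero,
        Zc_eq_Zw R (n - (j:ℤ)) (n + (j:ℤ) - 1) (2*j - 2*(i'+1)) (n-1) (n-1)
          (by omega) (by omega)]
  rw [Finset.sum_congr rfl hzw, Finset.sum_add_distrib]
  -- the Zc sum vanishes by the Cayley-Hamilton-type identity
  have hS0 : ∑ i ∈ Finset.range (j+1),
      ((-1:A)^i * Pdim R (n - (j:ℤ)) (n + (j:ℤ) - 1) i)
        * Zc R (n - (j:ℤ)) (n + (j:ℤ) - 1) (2*j - 2*i) (n-1) (n-1) = 0 := by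
    have key := Zc_key R (n - (j:ℤ)) (n + (j:ℤ) - 1) (2*j) j
      (by push_cast; ring) (by omega) (by omega) (n-1) (by omega) (by omega)
    rw [show (n + (j:ℤ) - 1) - (j:ℤ) = n - 1 from by ring] at key
    have hcf : ∀ i ∈ Finset.range (2*j+1),
        cf R (n + (j:ℤ) - 1) (2*j) i
          * Zc R (n - (j:ℤ)) (n + (j:ℤ) - 1) (2*j - 2*i) (n-1) (n-1)
        = ((-1:A)^i * Pdim R (n - (j:ℤ)) (n + (j:ℤ) - 1) i)
          * Zc R (n - (j:ℤ)) (n + (j:ℤ) - 1) (2*j - 2*i) (n-1) (n-1) := by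
      intro i _
      rw [cf, show (n + (j:ℤ) - 1) - ((2*j:ℕ):ℤ) + 1 = n - (j:ℤ) from by push_cast; ring]
    rw [Finset.sum_congr rfl hcf] at key
    rw [← key]
    apply Finset.sum_subset (Finset.range_subset_range.2 (by omega))
    intro i hi1 hi2
    rw [Finset.mem_range] at hi1 hi2
    rw [Pdim_vanish R _ _ i (by omega) (by omega), mul_zero, zero_mul]
  rw [hS0, zero_add, Finset.sum_ite_eq' (Finset.range (j+1)) 0
    (fun _ => ∏ h ∈ Finset.Icc (n - (j:ℤ)) (n-1), R h),
    if_pos (Finset.mem_range.2 (by omega))]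
  -- reindex the product
  apply Finset.prod_nbij' (fun l : ℕ => n - (l:ℤ)) (fun h : ℤ => (n - h).toNat)
  · intro l hl
    rw [Finset.mem_Icc] at hl ⊢
    omega
  · intro h hh
    rw [Finset.mem_Icc] at hh ⊢
    omega
  · intro l hl
    rw [Finset.mem_Icc] at hl
    omega
  · intro h hh
    rw [Finset.mem_Icc] at hh
    omega
  · intro l _
    rfl
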